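/- arXiv:1808.00787 — 3 statements merged into one kernel-verified Lean document; each statement's English description precedes it below -/
import Mathlib

section
/- Monotonicity of failure probability in capacity: for the decoupled single-station model with fixed initial vehicle count v and fixed rates, the failure probability q^F(T; v, c) is nonincreasing in the capacity c, i.e., c ≤ c' implies q^F(T; v, c') ≤ q^F(T; v, c), for all c ≥ v. -/
open Finset Filter Set

/-- Shifting the index down in a sum of an integer-indexed family. -/
private lemma sum_shift_down_eq (G : ℤ → ℝ) (n : ℕ) (hm : G (-1) = 0) :
    ∑ i ∈ Finset.range (n+1), G ((i:ℤ)-1) = (∑ i ∈ Finset.range (n+1), G (i:ℤ)) - G (n:ℤ) := by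
  rw [Finset.sum_range_succ' (fun i => G ((i:ℤ)-1)) n, Finset.sum_range_succ (fun i => G (i:ℤ)) n]
  have e : ∀ i : ℕ, G ((((i+1):ℕ):ℤ)-1) = G (i:ℤ) := by
    intro i; congr 1; omega
  rw [Finset.sum_congr rfl (fun i _ => e i)]
  simp [hm]

private lemma sum_shift_up_eq (G : ℤ → ℝ) (n : ℕ) (htop : G ((n:ℤ)+1) = 0) :
    ∑ i ∈ Finset.range (n+1), G ((i:ℤ)+1) = (∑ i ∈ Finset.range (n+1), G (i:ℤ)) - G 0 := by
  have h1 := Finset.sum_range_succ' (fun i => G (i:ℤ)) (n+1)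
  have h2 := Finset.sum_range_succ (fun i => G (i:ℤ)) (n+1)
  have e : ∀ i : ℕ, G ((((i+1):ℕ):ℤ)) = G ((i:ℤ)+1) := by
    intro i; norm_cast
  rw [Finset.sum_congr rfl (fun i _ => e i)] at h1
  have e2 : G (((n+1:ℕ)):ℤ) = 0 := by
    rw [← htop]; norm_cast
  rw [h2, e2] at h1
  simp only [Nat.cast_zero] at h1
  linarith

private lemma sum_shift_down_le (G : ℤ → ℝ) (n : ℕ) (hG : ∀ j, 0 ≤ G j) (hm : G (-1) = 0) :
    ∑ i ∈ Finset.range (n+1), G ((i:ℤ)-1) ≤ ∑ i ∈ Finset.range (n+1), G (i:ℤ) := by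
  rw [sum_shift_down_eq G n hm]; linarith [hG (n:ℤ)]

private lemma sum_shift_up_le (G : ℤ → ℝ) (n : ℕ) (hG : ∀ j, 0 ≤ G j) (htop : G ((n:ℤ)+1) = 0) :
    ∑ i ∈ Finset.range (n+1), G ((i:ℤ)+1) ≤ ∑ i ∈ Finset.range (n+1), G (i:ℤ) := by
  rw [sum_shift_up_eq G n htop]; linarith [hG 0]

/-- One-sided slope bound for the positive part of a differentiable function. -/
private lemma ev_max_slope {u : ℝ → ℝ} {d b t ε : ℝ} (hu : HasDerivAt u d t)
    (hb : 0 ≤ b) (hd : 0 ≤ u t → d ≤ b) (hε : 0 < ε) :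
    ∀ᶠ z in nhdsWithin t (Set.Ioi t), max (u z) 0 - max (u t) 0 ≤ (z - t) * (b + ε) := by
  rcases lt_or_ge (u t) 0 with hneg | hpos
  · have h1 : ∀ᶠ z in nhds t, u z < 0 :=
      Filter.Tendsto.eventually_lt_const hneg hu.continuousAt
    filter_upwards [eventually_nhdsWithin_of_eventually_nhds h1, self_mem_nhdsWithin]
      with z hz hz'
    have hzt : (0:ℝ) < z - t := sub_pos.2 hz'
    have h2 : max (u z) 0 = 0 := max_eq_right hz.le
    have h3 : max (u t) 0 = 0 := max_eq_right hneg.le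
    nlinarith
  · have hdb := hd hpos
    have hlo := (hasDerivAt_iff_isLittleO.mp hu).def hε
    filter_upwards [eventually_nhdsWithin_of_eventually_nhds hlo, self_mem_nhdsWithin]
      with z hz hz'
    have hzt : (0:ℝ) < z - t := sub_pos.2 hz'
    have habs : |u z - u t - (z - t) * d| ≤ ε * (z - t) := by
      simpa [Real.norm_eq_abs, abs_of_pos hzt, smul_eq_mul] using hz
    have h2 : u z - u t ≤ (z - t) * d + ε * (z - t) := by
      have := (abs_le.mp habs).2; linarith
    have hmax : max (u t) 0 = u t := max_eq_left hpos
    rw [hmax]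
    have hb' : u z ≤ u t + (z - t) * (b + ε) := by nlinarith
    have h0 : (0:ℝ) ≤ u t + (z - t) * (b + ε) := by nlinarith
    have := max_le hb' h0
    linarith

/-- `q`, `qF` solve the Kolmogorov forward equations of the decoupled
single-station birth–death model with killing, on states `{0,…,c}`, with
arrival rate `lamA`, departure rate `lamD`, and `v` vehicles initially. -/
structure DecoupledSol (lamA lamD : ℝ → ℝ) (v c : ℕ)
    (q : ℤ → ℝ → ℝ) (qF : ℝ → ℝ) : Prop where
  out : ∀ j : ℤ, (j < 0 ∨ (c : ℤ) < j) → ∀ t : ℝ, q j t = 0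
  init : ∀ j : ℤ, 0 ≤ j → j ≤ (c : ℤ) → q j 0 = if j = (v : ℤ) then 1 else 0
  initF : qF 0 = 0
  ode : ∀ j : ℤ, 0 ≤ j → j ≤ (c : ℤ) → ∀ t : ℝ, 0 ≤ t →
    HasDerivAt (q j)
      (lamA t * q (j - 1) t - (lamA t + lamD t) * q j t + lamD t * q (j + 1) t) t
  odeF : ∀ t : ℝ, 0 ≤ t →
    HasDerivAt qF (lamA t * q (c : ℤ) t + lamD t * q 0 t) t

/-- Conservation of total probability mass for a decoupled solution. -/
private lemma mass_conservation (lamA lamD : ℝ → ℝ) (v cc : ℕ)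
    (qq : ℤ → ℝ → ℝ) (qqF : ℝ → ℝ) (hs : DecoupledSol lamA lamD v cc qq qqF)
    (hv : v ≤ cc) (T : ℝ) (hT : 0 ≤ T) :
    qqF T + ∑ i ∈ Finset.range (cc+1), qq (i:ℤ) T = 1 := by
  classical
  set Φ : ℝ → ℝ := fun s => qqF s + ∑ i ∈ Finset.range (cc+1), qq (i:ℤ) s with hΦ
  have hbd : ∀ i : ℕ, i ∈ Finset.range (cc+1) → (0:ℤ) ≤ (i:ℤ) ∧ (i:ℤ) ≤ (cc:ℤ) := by
    intro i hi
    have := Finset.mem_range.mp hi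
    constructor
    · exact_mod_cast Nat.zero_le i
    · exact_mod_cast Nat.lt_succ_iff.mp this
  have hΦd : ∀ x : ℝ, 0 ≤ x → HasDerivAt Φ 0 x := by
    intro x hx
    have h1 : HasDerivAt (fun s => ∑ i ∈ Finset.range (cc+1), qq (i:ℤ) s)
        (∑ i ∈ Finset.range (cc+1),
          (lamA x * qq ((i:ℤ) - 1) x - (lamA x + lamD x) * qq (i:ℤ) x
            + lamD x * qq ((i:ℤ) + 1) x)) x :=
      HasDerivAt.fun_sum (fun i hi => hs.ode (i:ℤ) (hbd i hi).1 (hbd i hi).2 x hx)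
    have h2 := hs.odeF x hx
    have h3 := h2.add h1
    have hm : qq (-1) x = 0 := hs.out (-1) (Or.inl (by norm_num)) x
    have htop : qq ((cc:ℤ)+1) x = 0 := hs.out ((cc:ℤ)+1) (Or.inr (by linarith)) x
    have e1 : ∑ i ∈ Finset.range (cc+1), qq ((i:ℤ)-1) x
        = (∑ i ∈ Finset.range (cc+1), qq (i:ℤ) x) - qq (cc:ℤ) x := by
      simpa using sum_shift_down_eq (fun j => qq j x) cc hm
    have e2 : ∑ i ∈ Finset.range (cc+1), qq ((i:ℤ)+1) x
        = (∑ i ∈ Finset.range (cc+1), qq (i:ℤ) x) - qq 0 x := by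
      simpa using sum_shift_up_eq (fun j => qq j x) cc htop
    have hsum0 : (∑ i ∈ Finset.range (cc+1),
        (lamA x * qq ((i:ℤ) - 1) x - (lamA x + lamD x) * qq (i:ℤ) x
          + lamD x * qq ((i:ℤ) + 1) x))
        = -(lamA x * qq (cc:ℤ) x + lamD x * qq 0 x) := by
      have expand : (∑ i ∈ Finset.range (cc+1),
          (lamA x * qq ((i:ℤ) - 1) x - (lamA x + lamD x) * qq (i:ℤ) x
            + lamD x * qq ((i:ℤ) + 1) x))
          = lamA x * (∑ i ∈ Finset.range (cc+1), qq ((i:ℤ)-1) x)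
            - (lamA x + lamD x) * (∑ i ∈ Finset.range (cc+1), qq (i:ℤ) x)
            + lamD x * (∑ i ∈ Finset.range (cc+1), qq ((i:ℤ)+1) x) := by
        rw [Finset.mul_sum, Finset.mul_sum, Finset.mul_sum, ← Finset.sum_sub_distrib,
          ← Finset.sum_add_distrib]
      rw [expand, e1, e2]
      ring
    rw [hsum0] at h3
    have h4 : lamA x * qq (cc:ℤ) x + lamD x * qq 0 x
        + -(lamA x * qq (cc:ℤ) x + lamD x * qq 0 x) = 0 := by ring
    rw [h4] at h3
    exact h3
  have hcont : ContinuousOn Φ (Set.Icc 0 T) := by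
    intro x hx
    exact ((hΦd x hx.1).continuousAt).continuousWithinAt
  have hconst := constant_of_has_deriv_right_zero hcont
    (fun x hx => ((hΦd x hx.1).hasDerivWithinAt)) T (Set.right_mem_Icc.mpr hT)
  have hΦ0 : Φ 0 = 1 := by
    have hinit : ∀ i ∈ Finset.range (cc+1), qq (i:ℤ) 0 = if i = v then (1:ℝ) else 0 := by
      intro i hi
      rw [hs.init (i:ℤ) (hbd i hi).1 (hbd i hi).2]
      simp [Nat.cast_inj]
    rw [hΦ]
    simp only
    rw [Finset.sum_congr rfl hinit, Finset.sum_ite_eq' (Finset.range (cc+1)) v (fun _ => (1:ℝ)),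
      if_pos (Finset.mem_range.mpr (Nat.lt_succ_of_le hv)), hs.initF]
    ring
  rw [← hΦ0]
  exact hconst

set_option maxHeartbeats 1600000 in
/-- **Monotonicity of the failure probability in the station capacity.**
For the decoupled single-station model with fixed initial vehicle count `v`
and fixed (continuous, nonnegative) rates, the failure probability
`q^F(T; v, c)` is nonincreasing in the capacity `c`: if `v ≤ c ≤ c'` then
`q^F(T; v, c') ≤ q^F(T; v, c)` for every `T ≥ 0`. -/
theorem failure_prob_antitone_in_capacity
    (lamA lamD : ℝ → ℝ) (hA : Continuous lamA) (hD : Continuous lamD)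
    (hA0 : ∀ t, 0 ≤ lamA t) (hD0 : ∀ t, 0 ≤ lamD t)
    (v c c' : ℕ) (hvc : v ≤ c) (hcc' : c ≤ c')
    (q : ℤ → ℝ → ℝ) (qF : ℝ → ℝ) (hsol : DecoupledSol lamA lamD v c q qF)
    (q' : ℤ → ℝ → ℝ) (qF' : ℝ → ℝ) (hsol' : DecoupledSol lamA lamD v c' q' qF')
    (T : ℝ) (hT : 0 ≤ T) :
    qF' T ≤ qF T := by
  classical
  have hcc : (c:ℤ) ≤ (c':ℤ) := by exact_mod_cast hcc'
  -- continuity of the coordinate functions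
  have hcq : ∀ j : ℤ, ∀ t : ℝ, 0 ≤ t → ContinuousAt (q j) t := by
    intro j t ht
    rcases le_or_gt 0 j with hj0 | hj0
    · rcases le_or_gt j (c:ℤ) with hjc | hjc
      · exact (hsol.ode j hj0 hjc t ht).continuousAt
      · have hz : q j = fun _ => (0:ℝ) := funext (fun s => hsol.out j (Or.inr hjc) s)
        rw [hz]; exact continuousAt_const
    · have hz : q j = fun _ => (0:ℝ) := funext (fun s => hsol.out j (Or.inl hj0) s)
      rw [hz]; exact continuousAt_const
  have hcq' : ∀ j : ℤ, ∀ t : ℝ, 0 ≤ t → ContinuousAt (q' j) t := by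
    intro j t ht
    rcases le_or_gt 0 j with hj0 | hj0
    · rcases le_or_gt j (c':ℤ) with hjc | hjc
      · exact (hsol'.ode j hj0 hjc t ht).continuousAt
      · have hz : q' j = fun _ => (0:ℝ) := funext (fun s => hsol'.out j (Or.inr hjc) s)
        rw [hz]; exact continuousAt_const
    · have hz : q' j = fun _ => (0:ℝ) := funext (fun s => hsol'.out j (Or.inl hj0) s)
      rw [hz]; exact continuousAt_const
  -- the Lyapunov function
  set f : ℝ → ℝ := fun t => ∑ i ∈ Finset.range (c'+1+1),
      (max (q (i:ℤ) t - q' (i:ℤ) t) 0 + max (-q (i:ℤ) t) 0) with hfdef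
  have fnonneg : ∀ t, 0 ≤ f t := by
    intro t
    simp only [hfdef]
    apply Finset.sum_nonneg
    intro i _
    exact add_nonneg (le_max_right _ _) (le_max_right _ _)
  -- derivative facts for the coupling differences
  have hderivg : ∀ j : ℤ, 0 ≤ j → j ≤ (c':ℤ)+1 → ∀ t : ℝ, 0 ≤ t →
      ∃ d : ℝ, HasDerivAt (fun s => q j s - q' j s) d t ∧
        (0 ≤ q j t - q' j t → d ≤ lamA t * max (q (j-1) t - q' (j-1) t) 0
          + lamD t * max (q (j+1) t - q' (j+1) t) 0 + lamA t * max (-q (j-1) t) 0) := by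
    intro j hj0 hjtop t ht
    rcases le_or_gt j (c:ℤ) with hjc | hjc
    · refine ⟨_, (hsol.ode j hj0 hjc t ht).sub (hsol'.ode j hj0 (hjc.trans hcc) t ht), ?_⟩
      intro hpos
      have h1 : lamA t * (q (j-1) t - q' (j-1) t) ≤ lamA t * max (q (j-1) t - q' (j-1) t) 0 :=
        mul_le_mul_of_nonneg_left (le_max_left _ _) (hA0 t)
      have h2 : lamD t * (q (j+1) t - q' (j+1) t) ≤ lamD t * max (q (j+1) t - q' (j+1) t) 0 :=
        mul_le_mul_of_nonneg_left (le_max_left _ _) (hD0 t)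
      have h3 : 0 ≤ lamA t * max (-q (j-1) t) 0 := mul_nonneg (hA0 t) (le_max_right _ _)
      have h4 : 0 ≤ (lamA t + lamD t) * (q j t - q' j t) :=
        mul_nonneg (add_nonneg (hA0 t) (hD0 t)) hpos
      nlinarith [h1, h2, h3, h4]
    · rcases le_or_gt j (c':ℤ) with hjc' | hjc'
      · have hq0 : ∀ s, q j s = 0 := fun s => hsol.out j (Or.inr hjc) s
        have hq1 : q (j+1) t = 0 := hsol.out (j+1) (Or.inr (by linarith)) t
        have hdq : HasDerivAt (q j) 0 t := by
          have hz : q j = fun _ => (0:ℝ) := funext hq0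
          rw [hz]; exact hasDerivAt_const t 0
        refine ⟨_, hdq.sub (hsol'.ode j hj0 hjc' t ht), ?_⟩
        intro hpos
        have h1 : lamA t * (q (j-1) t - q' (j-1) t) ≤ lamA t * max (q (j-1) t - q' (j-1) t) 0 :=
          mul_le_mul_of_nonneg_left (le_max_left _ _) (hA0 t)
        have h1' : lamA t * (-q (j-1) t) ≤ lamA t * max (-q (j-1) t) 0 :=
          mul_le_mul_of_nonneg_left (le_max_left _ _) (hA0 t)
        have h2 : lamD t * (q (j+1) t - q' (j+1) t) ≤ lamD t * max (q (j+1) t - q' (j+1) t) 0 :=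
          mul_le_mul_of_nonneg_left (le_max_left _ _) (hD0 t)
        have h5 : q j t = 0 := hq0 t
        have h4' : (lamA t + lamD t) * q' j t ≤ 0 :=
          mul_nonpos_of_nonneg_of_nonpos (add_nonneg (hA0 t) (hD0 t)) (by linarith)
        have he : q (j+1) t - q' (j+1) t = -q' (j+1) t := by rw [hq1]; ring
        have h2' : lamD t * (-q' (j+1) t) ≤ lamD t * max (q (j+1) t - q' (j+1) t) 0 := by
          rw [← he]; exact h2
        nlinarith [h1, h1', h2', h4']
      · have hj : ∀ s, q j s = 0 := fun s => hsol.out j (Or.inr (by linarith)) s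
        have hj' : ∀ s, q' j s = 0 := fun s => hsol'.out j (Or.inr hjc') s
        have hz : (fun s => q j s - q' j s) = fun _ => (0:ℝ) :=
          funext (fun s => by rw [hj s, hj' s]; ring)
        refine ⟨0, by rw [hz]; exact hasDerivAt_const t 0, ?_⟩
        intro _
        have h3 : 0 ≤ lamA t * max (-q (j-1) t) 0 := mul_nonneg (hA0 t) (le_max_right _ _)
        have h3' : 0 ≤ lamA t * max (q (j-1) t - q' (j-1) t) 0 :=
          mul_nonneg (hA0 t) (le_max_right _ _)
        have h3'' : 0 ≤ lamD t * max (q (j+1) t - q' (j+1) t) 0 :=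
          mul_nonneg (hD0 t) (le_max_right _ _)
        linarith
  -- derivative facts for the negated coordinates
  have hderivw : ∀ j : ℤ, 0 ≤ j → j ≤ (c':ℤ)+1 → ∀ t : ℝ, 0 ≤ t →
      ∃ d : ℝ, HasDerivAt (fun s => -q j s) d t ∧
        (0 ≤ -q j t → d ≤ lamA t * max (-q (j-1) t) 0 + lamD t * max (-q (j+1) t) 0) := by
    intro j hj0 hjtop t ht
    rcases le_or_gt j (c:ℤ) with hjc | hjc
    · refine ⟨_, (hsol.ode j hj0 hjc t ht).neg, ?_⟩
      intro hpos
      have h1 : lamA t * (-q (j-1) t) ≤ lamA t * max (-q (j-1) t) 0 :=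
        mul_le_mul_of_nonneg_left (le_max_left _ _) (hA0 t)
      have h2 : lamD t * (-q (j+1) t) ≤ lamD t * max (-q (j+1) t) 0 :=
        mul_le_mul_of_nonneg_left (le_max_left _ _) (hD0 t)
      have h4 : 0 ≤ (lamA t + lamD t) * (-q j t) :=
        mul_nonneg (add_nonneg (hA0 t) (hD0 t)) hpos
      nlinarith [h1, h2, h4]
    · have hj : ∀ s, q j s = 0 := fun s => hsol.out j (Or.inr hjc) s
      have hz : (fun s => -q j s) = fun _ => (0:ℝ) := funext (fun s => by rw [hj s]; ring)
      refine ⟨0, by rw [hz]; exact hasDerivAt_const t 0, ?_⟩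
      intro _
      have h1 : 0 ≤ lamA t * max (-q (j-1) t) 0 := mul_nonneg (hA0 t) (le_max_right _ _)
      have h2 : 0 ≤ lamD t * max (-q (j+1) t) 0 := mul_nonneg (hD0 t) (le_max_right _ _)
      linarith
  -- index bookkeeping
  have hidx : ∀ i : ℕ, i ∈ Finset.range (c'+1+1) → (0:ℤ) ≤ (i:ℤ) ∧ (i:ℤ) ≤ (c':ℤ)+1 := by
    intro i hi
    have h := Finset.mem_range.mp hi
    exact ⟨Int.natCast_nonneg i, by exact_mod_cast Nat.lt_succ_iff.mp h⟩
  -- the Gronwall constant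
  obtain ⟨x₀, hx₀mem, hx₀⟩ := (isCompact_Icc (a := (0:ℝ)) (b := T)).exists_isMaxOn
    (Set.nonempty_Icc.mpr hT)
    ((continuous_const.mul (hA.add hD)).continuousOn :
      ContinuousOn (fun s => 2*(lamA s + lamD s)) (Set.Icc 0 T))
  set K : ℝ := 2*(lamA x₀ + lamD x₀) with hKdef
  have hKt : ∀ t ∈ Set.Icc (0:ℝ) T, 2*(lamA t + lamD t) ≤ K := fun t htm => hx₀ htm
  -- f vanishes at time 0
  have hf0 : f 0 = 0 := by
    simp only [hfdef]
    apply Finset.sum_eq_zero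
    intro i hi
    obtain ⟨hi0, hi1⟩ := hidx i hi
    rcases le_or_gt (i:ℤ) (c:ℤ) with hic | hic
    · have hq1 := hsol.init (i:ℤ) hi0 hic
      have hq2 := hsol'.init (i:ℤ) hi0 (hic.trans hcc)
      rw [hq1, hq2]
      split_ifs <;> norm_num
    · rcases le_or_gt (i:ℤ) (c':ℤ) with hic' | hic'
      · have hq1 : q (i:ℤ) 0 = 0 := hsol.out _ (Or.inr hic) 0
        have hq2 : q' (i:ℤ) 0 = 0 := by
          rw [hsol'.init (i:ℤ) hi0 hic']
          have hvne : (i:ℤ) ≠ (v:ℤ) := by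
            have hvcz : (v:ℤ) ≤ (c:ℤ) := by exact_mod_cast hvc
            omega
          simp [hvne]
        rw [hq1, hq2]; norm_num
      · have hq1 : q (i:ℤ) 0 = 0 := hsol.out _ (Or.inr hic) 0
        have hq2 : q' (i:ℤ) 0 = 0 := hsol'.out _ (Or.inr hic') 0
        rw [hq1, hq2]; norm_num
  -- continuity of f
  have hfc : ContinuousOn f (Set.Icc 0 T) := by
    intro t ht
    have h0t : 0 ≤ t := ht.1
    have hca : ContinuousAt f t := by
      simp only [hfdef]
      apply tendsto_finset_sum
      intro i _
      exact (((hcq (i:ℤ) t h0t).sub (hcq' (i:ℤ) t h0t)).max continuousAt_const).add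
        (((hcq (i:ℤ) t h0t).neg).max continuousAt_const)
    exact hca.continuousWithinAt
  -- the liminf slope estimate
  have hslope : ∀ t ∈ Set.Ico (0:ℝ) T, ∀ r, K * f t < r →
      ∃ᶠ z in nhdsWithin t (Set.Ioi t), (z - t)⁻¹ * (f z - f t) < r := by
    intro t ht r hr
    set ε : ℝ := (r - K * f t) / (4*((c'+1+1:ℕ):ℝ)) with hεdef
    have hNpos : (0:ℝ) < ((c'+1+1:ℕ):ℝ) := by positivity
    have hε0 : 0 < ε := div_pos (by linarith) (by positivity)
    set Bg : ℕ → ℝ := fun i => lamA t * max (q ((i:ℤ)-1) t - q' ((i:ℤ)-1) t) 0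
      + lamD t * max (q ((i:ℤ)+1) t - q' ((i:ℤ)+1) t) 0
      + lamA t * max (-q ((i:ℤ)-1) t) 0 with hBgdef
    set Bw : ℕ → ℝ := fun i => lamA t * max (-q ((i:ℤ)-1) t) 0
      + lamD t * max (-q ((i:ℤ)+1) t) 0 with hBwdef
    have hBg0 : ∀ i, 0 ≤ Bg i := by
      intro i
      simp only [hBgdef]
      have a1 : 0 ≤ lamA t * max (q ((i:ℤ)-1) t - q' ((i:ℤ)-1) t) 0 :=
        mul_nonneg (hA0 t) (le_max_right _ _)
      have a2 : 0 ≤ lamD t * max (q ((i:ℤ)+1) t - q' ((i:ℤ)+1) t) 0 :=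
        mul_nonneg (hD0 t) (le_max_right _ _)
      have a3 : 0 ≤ lamA t * max (-q ((i:ℤ)-1) t) 0 := mul_nonneg (hA0 t) (le_max_right _ _)
      linarith
    have hBw0 : ∀ i, 0 ≤ Bw i := by
      intro i
      simp only [hBwdef]
      have a1 : 0 ≤ lamA t * max (-q ((i:ℤ)-1) t) 0 := mul_nonneg (hA0 t) (le_max_right _ _)
      have a2 : 0 ≤ lamD t * max (-q ((i:ℤ)+1) t) 0 := mul_nonneg (hD0 t) (le_max_right _ _)
      linarith
    have HH : ∀ i ∈ Finset.range (c'+1+1),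
        ∀ᶠ z in nhdsWithin t (Set.Ioi t),
          (max (q (i:ℤ) z - q' (i:ℤ) z) 0 - max (q (i:ℤ) t - q' (i:ℤ) t) 0
            ≤ (z - t) * (Bg i + ε))
          ∧ (max (-q (i:ℤ) z) 0 - max (-q (i:ℤ) t) 0 ≤ (z - t) * (Bw i + ε)) := by
      intro i hi
      obtain ⟨hi0, hi1⟩ := hidx i hi
      obtain ⟨d, hd, hdb⟩ := hderivg (i:ℤ) hi0 hi1 t ht.1
      obtain ⟨e, he, heb⟩ := hderivw (i:ℤ) hi0 hi1 t ht.1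
      exact (ev_max_slope hd (hBg0 i) hdb hε0).and (ev_max_slope he (hBw0 i) heb hε0)
    have HH' := (Filter.eventually_all_finset (Finset.range (c'+1+1))).mpr HH
    -- bound on the sum of the slope bounds
    have hBsum : ∑ i ∈ Finset.range (c'+1+1), (Bg i + Bw i) ≤ K * f t := by
      set Sg : ℝ := ∑ i ∈ Finset.range (c'+1+1), max (q (i:ℤ) t - q' (i:ℤ) t) 0 with hSgdef
      set Sw : ℝ := ∑ i ∈ Finset.range (c'+1+1), max (-q (i:ℤ) t) 0 with hSwdef
      have hm1 : max (q (-1:ℤ) t - q' (-1:ℤ) t) 0 = 0 := by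
        rw [hsol.out (-1) (Or.inl (by norm_num)) t, hsol'.out (-1) (Or.inl (by norm_num)) t]
        norm_num
      have hm2 : max (-q (-1:ℤ) t) 0 = 0 := by
        rw [hsol.out (-1) (Or.inl (by norm_num)) t]; norm_num
      have htop1 : max (q (((c'+1:ℕ):ℤ)+1) t - q' (((c'+1:ℕ):ℤ)+1) t) 0 = 0 := by
        rw [hsol.out _ (Or.inr (by push_cast; linarith)) t,
          hsol'.out _ (Or.inr (by push_cast; linarith)) t]
        norm_num
      have htop2 : max (-q (((c'+1:ℕ):ℤ)+1) t) 0 = 0 := by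
        rw [hsol.out _ (Or.inr (by push_cast; linarith)) t]; norm_num
      have s1 : ∑ i ∈ Finset.range (c'+1+1), max (q ((i:ℤ)-1) t - q' ((i:ℤ)-1) t) 0 ≤ Sg :=
        sum_shift_down_le (fun j => max (q j t - q' j t) 0) (c'+1)
          (fun j => le_max_right _ _) hm1
      have s2 : ∑ i ∈ Finset.range (c'+1+1), max (q ((i:ℤ)+1) t - q' ((i:ℤ)+1) t) 0 ≤ Sg :=
        sum_shift_up_le (fun j => max (q j t - q' j t) 0) (c'+1)
          (fun j => le_max_right _ _) htop1
      have s3 : ∑ i ∈ Finset.range (c'+1+1), max (-q ((i:ℤ)-1) t) 0 ≤ Sw :=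
        sum_shift_down_le (fun j => max (-q j t) 0) (c'+1) (fun j => le_max_right _ _) hm2
      have s4 : ∑ i ∈ Finset.range (c'+1+1), max (-q ((i:ℤ)+1) t) 0 ≤ Sw :=
        sum_shift_up_le (fun j => max (-q j t) 0) (c'+1) (fun j => le_max_right _ _) htop2
      have expand : ∑ i ∈ Finset.range (c'+1+1), (Bg i + Bw i)
          = lamA t * (∑ i ∈ Finset.range (c'+1+1), max (q ((i:ℤ)-1) t - q' ((i:ℤ)-1) t) 0)
            + lamD t * (∑ i ∈ Finset.range (c'+1+1), max (q ((i:ℤ)+1) t - q' ((i:ℤ)+1) t) 0)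
            + (2 * lamA t) * (∑ i ∈ Finset.range (c'+1+1), max (-q ((i:ℤ)-1) t) 0)
            + lamD t * (∑ i ∈ Finset.range (c'+1+1), max (-q ((i:ℤ)+1) t) 0) := by
        simp only [hBgdef, hBwdef, Finset.mul_sum, ← Finset.sum_add_distrib]
        apply Finset.sum_congr rfl
        intro i _
        ring
      have hSg0 : 0 ≤ Sg := Finset.sum_nonneg (fun i _ => le_max_right _ _)
      have hSw0 : 0 ≤ Sw := Finset.sum_nonneg (fun i _ => le_max_right _ _)
      have hfsplit : f t = Sg + Sw := by
        simp only [hfdef, hSgdef, hSwdef, Finset.sum_add_distrib]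
      have hfin : 2*(lamA t + lamD t) ≤ K := hKt t ⟨ht.1, ht.2.le⟩
      have c1 : lamA t * (∑ i ∈ Finset.range (c'+1+1),
          max (q ((i:ℤ)-1) t - q' ((i:ℤ)-1) t) 0) ≤ lamA t * Sg :=
        mul_le_mul_of_nonneg_left s1 (hA0 t)
      have c2 : lamD t * (∑ i ∈ Finset.range (c'+1+1),
          max (q ((i:ℤ)+1) t - q' ((i:ℤ)+1) t) 0) ≤ lamD t * Sg :=
        mul_le_mul_of_nonneg_left s2 (hD0 t)
      have c3 : (2 * lamA t) * (∑ i ∈ Finset.range (c'+1+1),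
          max (-q ((i:ℤ)-1) t) 0) ≤ (2 * lamA t) * Sw :=
        mul_le_mul_of_nonneg_left s3 (by linarith [hA0 t])
      have c4 : lamD t * (∑ i ∈ Finset.range (c'+1+1),
          max (-q ((i:ℤ)+1) t) 0) ≤ lamD t * Sw :=
        mul_le_mul_of_nonneg_left s4 (hD0 t)
      have hKf : 2*(lamA t + lamD t) * (Sg + Sw) ≤ K * f t := by
        rw [hfsplit]
        exact mul_le_mul_of_nonneg_right hfin (by linarith)
      rw [expand]
      nlinarith [c1, c2, c3, c4, mul_nonneg (hA0 t) hSg0, mul_nonneg (hD0 t) hSg0,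
        mul_nonneg (hA0 t) hSw0, mul_nonneg (hD0 t) hSw0]
    -- assemble the eventual slope bound
    apply Filter.Eventually.frequently
    filter_upwards [HH', self_mem_nhdsWithin] with z hz hz'
    have hzt : (0:ℝ) < z - t := sub_pos.2 hz'
    have step1 : f z - f t = ∑ i ∈ Finset.range (c'+1+1),
        ((max (q (i:ℤ) z - q' (i:ℤ) z) 0 - max (q (i:ℤ) t - q' (i:ℤ) t) 0)
          + (max (-q (i:ℤ) z) 0 - max (-q (i:ℤ) t) 0)) := by
      simp only [hfdef]
      rw [← Finset.sum_sub_distrib]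
      apply Finset.sum_congr rfl
      intro i _
      ring
    have step2 : f z - f t ≤ ∑ i ∈ Finset.range (c'+1+1),
        ((z - t) * (Bg i + ε) + (z - t) * (Bw i + ε)) := by
      rw [step1]
      apply Finset.sum_le_sum
      intro i hi
      obtain ⟨hgz, hwz⟩ := hz i hi
      linarith
    have step3 : ∑ i ∈ Finset.range (c'+1+1), ((z - t) * (Bg i + ε) + (z - t) * (Bw i + ε))
        = (z - t) * ((∑ i ∈ Finset.range (c'+1+1), (Bg i + Bw i)) + ((c'+1+1:ℕ):ℝ) * (2*ε)) := by
      have e : ∀ i ∈ Finset.range (c'+1+1),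
          (z - t) * (Bg i + ε) + (z - t) * (Bw i + ε) = (z - t) * ((Bg i + Bw i) + 2*ε) :=
        fun i _ => by ring
      rw [Finset.sum_congr rfl e, ← Finset.mul_sum, Finset.sum_add_distrib,
        Finset.sum_const, Finset.card_range]
      simp [nsmul_eq_mul]
    have h2n : ((c'+1+1:ℕ):ℝ) * (2*ε) = (r - K * f t)/2 := by
      rw [hεdef]
      field_simp
      ring
    have hle : f z - f t ≤ (z - t) * (K * f t + (r - K * f t)/2) := by
      calc f z - f t ≤ ∑ i ∈ Finset.range (c'+1+1),
            ((z - t) * (Bg i + ε) + (z - t) * (Bw i + ε)) := step2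
        _ = (z - t) * ((∑ i ∈ Finset.range (c'+1+1), (Bg i + Bw i))
              + ((c'+1+1:ℕ):ℝ) * (2*ε)) := step3
        _ ≤ (z - t) * (K * f t + (r - K * f t)/2) := by
            apply mul_le_mul_of_nonneg_left _ hzt.le
            rw [h2n]
            linarith [hBsum]
    have hquot : (z - t)⁻¹ * (f z - f t) ≤ K * f t + (r - K * f t)/2 := by
      have hmul := mul_le_mul_of_nonneg_left hle (inv_nonneg.mpr hzt.le)
      rwa [inv_mul_cancel_left₀ hzt.ne'] at hmul
    linarith
  -- Gronwall
  have hbound : ∀ x ∈ Set.Ico (0:ℝ) T, K * f x ≤ K * f x + 0 := fun x _ => by simp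
  have hgron := le_gronwallBound_of_liminf_deriv_right_le (δ := 0) (K := K) (ε := 0)
    (a := 0) (b := T) (f := f) (f' := fun s => K * f s) hfc hslope (le_of_eq hf0) hbound
  have hfT : f T = 0 := by
    have h1 := hgron T ⟨hT, le_rfl⟩
    rw [gronwallBound_ε0_δ0] at h1
    exact le_antisymm h1 (fnonneg T)
  -- extract the coordinatewise comparison at time T
  have hterm : ∀ i ∈ Finset.range (c'+1+1),
      max (q (i:ℤ) T - q' (i:ℤ) T) 0 + max (-q (i:ℤ) T) 0 = 0 := by
    rw [hfdef] at hfT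
    exact (Finset.sum_eq_zero_iff_of_nonneg
      (fun i _ => add_nonneg (le_max_right _ _) (le_max_right _ _))).mp hfT
  have hΔle : ∀ i : ℕ, i < c'+1+1 → q (i:ℤ) T ≤ q' (i:ℤ) T := by
    intro i hi
    have h := hterm i (Finset.mem_range.mpr hi)
    have a1 := le_max_right (q (i:ℤ) T - q' (i:ℤ) T) 0
    have a2 := le_max_right (-q (i:ℤ) T) 0
    have h1 : max (q (i:ℤ) T - q' (i:ℤ) T) 0 = 0 := by linarith
    have h2 := le_max_left (q (i:ℤ) T - q' (i:ℤ) T) 0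
    linarith [h2.trans_eq h1]
  -- mass conservation for both systems
  have hm1 := mass_conservation lamA lamD v c q qF hsol hvc T hT
  have hm2 := mass_conservation lamA lamD v c' q' qF' hsol' (hvc.trans hcc') T hT
  -- compare the surviving masses
  have h3 : ∑ i ∈ Finset.range (c+1), q (i:ℤ) T ≤ ∑ i ∈ Finset.range (c'+1), q' (i:ℤ) T := by
    calc ∑ i ∈ Finset.range (c+1), q (i:ℤ) T ≤ ∑ i ∈ Finset.range (c+1), q' (i:ℤ) T := by
          apply Finset.sum_le_sum
          intro i hi
          have hic := Finset.mem_range.mp hi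
          exact hΔle i (by omega)
      _ ≤ ∑ i ∈ Finset.range (c'+1), q' (i:ℤ) T := by
          apply Finset.sum_le_sum_of_subset_of_nonneg (Finset.range_subset_range.mpr (by omega))
          intro i hi hni
          have hic1 := Finset.mem_range.mp hi
          have hic2 : ¬ i < c+1 := fun hcon => hni (Finset.mem_range.mpr hcon)
          have hic : (c:ℤ) < (i:ℤ) := by exact_mod_cast (by omega : c < i)
          have hq0 : q (i:ℤ) T = 0 := hsol.out _ (Or.inr hic) T
          have := hΔle i (by omega)
          linarith
  linarith
end

section
/- Stochastic dominance under decoupling (two-station toy case): consider two stations with a single Poisson stream at rate λ moving vehicles from station 1 to station 2. In the coupled chain, a jump at station 2 occurs only if station 1 is nonempty; in the decoupled chain for station 2, jumps occur at every event. Then for every t and every j, the probability that the decoupled station 2 has exactly j vehicles and has not failed upper-bounds the probability that the coupled station 2 has exactly j vehicles and the system has not failed: P(V_2(t) = j) ≤ P(V̄_2(t) = j). -/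
open Finset

private lemma nonneg_of_deriv_nonneg (f f' : ℝ → ℝ)
    (hd : ∀ t : ℝ, 0 ≤ t → HasDerivAt f (f' t) t)
    (h' : ∀ t : ℝ, 0 ≤ t → 0 ≤ f' t) (h0 : 0 ≤ f 0) :
    ∀ t : ℝ, 0 ≤ t → 0 ≤ f t := by
  have mono : MonotoneOn f (Set.Ici (0 : ℝ)) := by
    apply monotoneOn_of_deriv_nonneg (convex_Ici 0)
    · exact fun x hx => (hd x hx).continuousAt.continuousWithinAt
    · intro x hx
      rw [interior_Ici] at hx
      exact (hd x hx.le).differentiableAt.differentiableWithinAt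
    · intro x hx
      rw [interior_Ici] at hx
      rw [(hd x hx.le).deriv]
      exact h' x hx.le
  intro t ht
  exact h0.trans (mono Set.self_mem_Ici ht ht)

/-- **Stochastic dominance under decoupling (two-station toy case).**
Two stations; a single Poisson stream at rate `lam` moves vehicles from
station 1 (initially `v1` vehicles, no arrivals) to station 2 (initially
`v2` vehicles, capacity `c2`).  Coupled chain: at each event, if station 1 is
empty or station 2 is full the system enters the absorbing failure state `F`;
otherwise station 1 loses and station 2 gains one vehicle.  Its forward
equations for `p a b t = P(V₁(t)=a, V₂(t)=b, no failure)` are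
`ṗ a b = lam·p (a+1) (b-1) - lam·p a b` (probabilities vanishing outside
`{0,…,v1}×{0,…,c2}`).  Decoupled chain for station 2: station 2 gains a
vehicle at every event, failing from state `c2`; its forward equations are
`q̇ j = lam·q (j-1) - lam·q j` on `{0,…,c2}`.  Then for every `t ≥ 0` and
every `j`, `P(V₂(t)=j) = ∑_a p a j t ≤ q j t = P(V̄₂(t)=j)`. -/
theorem decoupled_dominates_coupled_two_stations
    (lam : ℝ) (hlam : 0 ≤ lam)
    (v1 v2 c2 : ℕ) (hv2 : v2 ≤ c2)
    (p : ℤ → ℤ → ℝ → ℝ) (q : ℤ → ℝ → ℝ)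
    (hpout : ∀ a b : ℤ, (a < 0 ∨ (v1 : ℤ) < a ∨ b < 0 ∨ (c2 : ℤ) < b) →
      ∀ t : ℝ, p a b t = 0)
    (hpinit : ∀ a b : ℤ, 0 ≤ a → a ≤ (v1 : ℤ) → 0 ≤ b → b ≤ (c2 : ℤ) →
      p a b 0 = if a = (v1 : ℤ) ∧ b = (v2 : ℤ) then 1 else 0)
    (hpode : ∀ a b : ℤ, 0 ≤ a → a ≤ (v1 : ℤ) → 0 ≤ b → b ≤ (c2 : ℤ) →
      ∀ t : ℝ, 0 ≤ t →
        HasDerivAt (p a b) (lam * p (a + 1) (b - 1) t - lam * p a b t) t)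
    (hqout : ∀ j : ℤ, (j < 0 ∨ (c2 : ℤ) < j) → ∀ t : ℝ, q j t = 0)
    (hqinit : ∀ j : ℤ, 0 ≤ j → j ≤ (c2 : ℤ) → q j 0 = if j = (v2 : ℤ) then 1 else 0)
    (hqode : ∀ j : ℤ, 0 ≤ j → j ≤ (c2 : ℤ) → ∀ t : ℝ, 0 ≤ t →
      HasDerivAt (q j) (lam * q (j - 1) t - lam * q j t) t) :
    ∀ t : ℝ, 0 ≤ t → ∀ j : ℤ, 0 ≤ j → j ≤ (c2 : ℤ) →
      (∑ a ∈ Finset.Icc (0 : ℤ) (v1 : ℤ), p a j t) ≤ q j t := by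
  -- Step 1: nonnegativity of p on t ≥ 0
  have hexp : ∀ t : ℝ, HasDerivAt (fun s : ℝ => Real.exp (lam * s))
      (lam * Real.exp (lam * t)) t := by
    intro t
    have h := (Real.hasDerivAt_exp (lam * t)).comp t ((hasDerivAt_id t).const_mul lam)
    exact h.congr_deriv (by ring)
  have key : ∀ a b : ℤ, (∀ b' : ℤ, ∀ t : ℝ, 0 ≤ t → 0 ≤ p (a + 1) b' t) →
      ∀ t : ℝ, 0 ≤ t → 0 ≤ p a b t := by
    intro a b hnext t ht
    by_cases hrange : 0 ≤ a ∧ a ≤ (v1 : ℤ) ∧ 0 ≤ b ∧ b ≤ (c2 : ℤ)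
    · obtain ⟨ha0, ha1, hb0, hb1⟩ := hrange
      have hd : ∀ s : ℝ, 0 ≤ s → HasDerivAt (fun u : ℝ => Real.exp (lam * u) * p a b u)
          (lam * Real.exp (lam * s) * p (a + 1) (b - 1) s) s := by
        intro s hs
        have h := (hexp s).mul (hpode a b ha0 ha1 hb0 hb1 s hs)
        exact h.congr_deriv (by ring)
      have hnn : 0 ≤ Real.exp (lam * t) * p a b t := by
        apply nonneg_of_deriv_nonneg _ _ hd
        · intro s hs
          have := hnext (b - 1) s hs
          positivity
        · simp only [mul_zero, Real.exp_zero, one_mul]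
          rw [hpinit a b ha0 ha1 hb0 hb1]
          split_ifs <;> norm_num
        · exact ht
      nlinarith [Real.exp_pos (lam * t)]
    · have : a < 0 ∨ (v1 : ℤ) < a ∨ b < 0 ∨ (c2 : ℤ) < b := by omega
      rw [hpout a b this t]
  have hpnn : ∀ a b : ℤ, ∀ t : ℝ, 0 ≤ t → 0 ≤ p a b t := by
    have H : ∀ k : ℕ, ∀ a b : ℤ, (v1 : ℤ) ≤ a + k → ∀ t : ℝ, 0 ≤ t → 0 ≤ p a b t := by
      intro k
      induction k with
      | zero =>
        intro a b hab t ht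
        apply key a b _ t ht
        intro b' s hs
        rw [hpout (a + 1) b' (by omega) s]
      | succ n ih =>
        intro a b hab t ht
        exact key a b (fun b' s hs => ih (a + 1) b' (by push_cast at hab ⊢; omega) s hs) t ht
    intro a b t ht
    refine H (v1 - a).toNat a b ?_ t ht
    have := Int.self_le_toNat ((v1 : ℤ) - a)
    omega
  -- Step 2: derivative of column sums
  have hSderiv : ∀ j : ℤ, 0 ≤ j → j ≤ (c2 : ℤ) → ∀ t : ℝ, 0 ≤ t →
      HasDerivAt (fun s : ℝ => ∑ a ∈ Finset.Icc (0 : ℤ) (v1 : ℤ), p a j s)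
        (lam * (∑ a ∈ Finset.Icc (0 : ℤ) (v1 : ℤ), p a (j - 1) t) - lam * p 0 (j - 1) t
          - lam * ∑ a ∈ Finset.Icc (0 : ℤ) (v1 : ℤ), p a j t) t := by
    intro j hj0 hj1 t ht
    have h := HasDerivAt.fun_sum (fun a (ha : a ∈ Finset.Icc (0 : ℤ) (v1 : ℤ)) => by
      rw [Finset.mem_Icc] at ha
      exact hpode a j ha.1 ha.2 hj0 hj1 t ht)
    refine h.congr_deriv ?_
    symm
    rw [Finset.sum_sub_distrib]
    have hshift : ∑ a ∈ Finset.Icc (0 : ℤ) (v1 : ℤ), lam * p (a + 1) (j - 1) t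
        = ∑ a ∈ Finset.Icc (1 : ℤ) ((v1 : ℤ) + 1), lam * p a (j - 1) t := by
      have hmap : Finset.Icc (1 : ℤ) ((v1 : ℤ) + 1)
          = (Finset.Icc (0 : ℤ) (v1 : ℤ)).map (addRightEmbedding 1) := by
        rw [Finset.map_add_right_Icc]; norm_num
      rw [hmap, Finset.sum_map]
      simp [addRightEmbedding]
    have h1 : Finset.Icc (0 : ℤ) ((v1 : ℤ) + 1)
        = insert (0 : ℤ) (Finset.Icc (1 : ℤ) ((v1 : ℤ) + 1)) := by
      ext x; simp only [Finset.mem_Icc, Finset.mem_insert]; omega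
    have h2 : Finset.Icc (0 : ℤ) ((v1 : ℤ) + 1)
        = insert ((v1 : ℤ) + 1) (Finset.Icc (0 : ℤ) (v1 : ℤ)) := by
      ext x; simp only [Finset.mem_Icc, Finset.mem_insert]; omega
    have hni1 : (0 : ℤ) ∉ Finset.Icc (1 : ℤ) ((v1 : ℤ) + 1) := by simp
    have hni2 : ((v1 : ℤ) + 1) ∉ Finset.Icc (0 : ℤ) (v1 : ℤ) := by simp
    have hv1top : p ((v1 : ℤ) + 1) (j - 1) t = 0 := hpout _ _ (by omega) t
    have : ∑ a ∈ Finset.Icc (1 : ℤ) ((v1 : ℤ) + 1), lam * p a (j - 1) t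
        = lam * (∑ a ∈ Finset.Icc (0 : ℤ) (v1 : ℤ), p a (j - 1) t) - lam * p 0 (j - 1) t := by
      have e1 : ∑ a ∈ Finset.Icc (0 : ℤ) ((v1 : ℤ) + 1), lam * p a (j - 1) t
          = lam * p 0 (j - 1) t + ∑ a ∈ Finset.Icc (1 : ℤ) ((v1 : ℤ) + 1), lam * p a (j - 1) t := by
        rw [h1, Finset.sum_insert hni1]
      have e2 : ∑ a ∈ Finset.Icc (0 : ℤ) ((v1 : ℤ) + 1), lam * p a (j - 1) t
          = lam * p ((v1 : ℤ) + 1) (j - 1) t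
            + ∑ a ∈ Finset.Icc (0 : ℤ) (v1 : ℤ), lam * p a (j - 1) t := by
        rw [h2, Finset.sum_insert hni2]
      rw [hv1top, Finset.mul_sum] at *
      linarith
    rw [hshift, this]
    simp only [Finset.mul_sum]
  -- Step 3: the inductive step comparing column sums with q
  have hSinit : ∀ j : ℤ, 0 ≤ j → j ≤ (c2 : ℤ) →
      (∑ a ∈ Finset.Icc (0 : ℤ) (v1 : ℤ), p a j 0) = if j = (v2 : ℤ) then 1 else 0 := by
    intro j hj0 hj1
    have : ∀ a ∈ Finset.Icc (0 : ℤ) (v1 : ℤ),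
        p a j 0 = if a = (v1 : ℤ) ∧ j = (v2 : ℤ) then 1 else 0 := by
      intro a ha
      rw [Finset.mem_Icc] at ha
      exact hpinit a j ha.1 ha.2 hj0 hj1
    rw [Finset.sum_congr rfl this]
    by_cases hj : j = (v2 : ℤ)
    · simp [hj, Finset.sum_ite_eq']
    · simp [hj]
  have step : ∀ j : ℤ, 0 ≤ j → j ≤ (c2 : ℤ) →
      (∀ t : ℝ, 0 ≤ t → (∑ a ∈ Finset.Icc (0 : ℤ) (v1 : ℤ), p a (j - 1) t) ≤ q (j - 1) t) →
      ∀ t : ℝ, 0 ≤ t → (∑ a ∈ Finset.Icc (0 : ℤ) (v1 : ℤ), p a j t) ≤ q j t := by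
    intro j hj0 hj1 hprev t ht
    have hd : ∀ s : ℝ, 0 ≤ s → HasDerivAt
        (fun u : ℝ => Real.exp (lam * u) * (q j u - ∑ a ∈ Finset.Icc (0 : ℤ) (v1 : ℤ), p a j u))
        (Real.exp (lam * s) * (lam * (q (j - 1) s - ∑ a ∈ Finset.Icc (0 : ℤ) (v1 : ℤ), p a (j - 1) s)
          + lam * p 0 (j - 1) s)) s := by
      intro s hs
      have hq := hqode j hj0 hj1 s hs
      have hS := hSderiv j hj0 hj1 s hs
      have h := (hexp s).mul (hq.sub hS)
      exact h.congr_deriv (by simp only [Pi.sub_apply]; ring)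
    have hnn : 0 ≤ Real.exp (lam * t)
        * (q j t - ∑ a ∈ Finset.Icc (0 : ℤ) (v1 : ℤ), p a j t) := by
      apply nonneg_of_deriv_nonneg _ _ hd _ _ t ht
      · intro s hs
        have h1 : 0 ≤ q (j - 1) s - ∑ a ∈ Finset.Icc (0 : ℤ) (v1 : ℤ), p a (j - 1) s :=
          sub_nonneg.2 (hprev s hs)
        have h2 : 0 ≤ p 0 (j - 1) s := hpnn 0 (j - 1) s hs
        have h3 : (0:ℝ) < Real.exp (lam * s) := Real.exp_pos _
        positivity
      · simp only [mul_zero, Real.exp_zero, one_mul]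
        rw [hqinit j hj0 hj1, hSinit j hj0 hj1]
        simp
    nlinarith [Real.exp_pos (lam * t)]
  -- Step 4: induction over j
  have main : ∀ n : ℕ, (n : ℤ) ≤ (c2 : ℤ) → ∀ t : ℝ, 0 ≤ t →
      (∑ a ∈ Finset.Icc (0 : ℤ) (v1 : ℤ), p a (n : ℤ) t) ≤ q (n : ℤ) t := by
    intro n
    induction n with
    | zero =>
      intro hn t ht
      apply step 0 le_rfl (by exact_mod_cast Nat.cast_nonneg c2) _ t ht
      intro s hs
      have hq : q ((0:ℤ) - 1) s = 0 := hqout _ (by omega) s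
      have hp : ∀ a ∈ Finset.Icc (0 : ℤ) (v1 : ℤ), p a ((0:ℤ) - 1) s = 0 := by
        intro a _
        exact hpout a _ (by omega) s
      rw [hq, Finset.sum_congr rfl hp, Finset.sum_const_zero]
    | succ m ih =>
      intro hn t ht
      apply step ((m : ℤ) + 1) (by omega) (by push_cast at hn ⊢; omega) _ t ht
      intro s hs
      have he : ((m : ℤ) + 1) - 1 = (m : ℤ) := by ring
      rw [he]
      exact ih (by push_cast at hn ⊢; omega) s hs
  intro t ht j hj0 hj1
  have hj : ((j.toNat : ℕ) : ℤ) = j := Int.toNat_of_nonneg hj0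
  rw [← hj]
  exact main j.toNat (by rw [hj]; exact hj1) t ht
end

section
/- Comparison lemma for linear ODE systems with sub-stochastic coupling: let p(t) ∈ ℝ^{c+1} solve ṗ = Q(t)p − r(t) and q(t) ∈ ℝ^{c+1} solve q̇ = Q(t)q, with the same initial condition p(0) = q(0) ≥ 0, where Q(t) is a generator-type matrix (nonnegative off-diagonal entries) and r(t) ≥ 0 componentwise. Then p(t) ≤ q(t) componentwise for all t ≥ 0. -/
open Filter Topology Set

/-- **Comparison lemma for linear ODE systems with sub-stochastic coupling.**
Let `Q t` be a continuous family of Metzler (generator-type) matrices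
(nonnegative off-diagonal entries) and `r t ≥ 0` a continuous loss term.
If `p` solves `ṗ = Q(t)p - r(t)` and `q` solves `q̇ = Q(t)q` with the same
nonnegative initial condition `p 0 = q 0 ≥ 0`, then `p t ≤ q t`
componentwise for all `t ≥ 0`. -/
theorem ode_comparison_substochastic
    (n : ℕ)
    (Q : ℝ → Matrix (Fin n) (Fin n) ℝ)
    (hQcont : ∀ i j, Continuous fun t => Q t i j)
    (hQmetzler : ∀ t : ℝ, 0 ≤ t → ∀ i j : Fin n, i ≠ j → 0 ≤ Q t i j)
    (r : ℝ → Fin n → ℝ)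
    (hrcont : ∀ i, Continuous fun t => r t i)
    (hrnonneg : ∀ t : ℝ, 0 ≤ t → ∀ i, 0 ≤ r t i)
    (p q : ℝ → Fin n → ℝ)
    (hp : ∀ (i : Fin n) (t : ℝ), 0 ≤ t →
      HasDerivAt (fun s => p s i) ((Q t).mulVec (p t) i - r t i) t)
    (hq : ∀ (i : Fin n) (t : ℝ), 0 ≤ t →
      HasDerivAt (fun s => q s i) ((Q t).mulVec (q t) i) t)
    (hinit : p 0 = q 0) (hinit_nonneg : ∀ i, 0 ≤ p 0 i) :
    ∀ t : ℝ, 0 ≤ t → ∀ i, p t i ≤ q t i := by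
  intro T hT i0
  set u : ℝ → Fin n → ℝ := fun s j => q s j - p s j with hu
  have hu0 : ∀ j, u 0 j = 0 := by intro j; simp [hu, hinit]
  have hud : ∀ (j : Fin n) (s : ℝ), 0 ≤ s →
      HasDerivAt (fun w => u w j) ((Q s).mulVec (u s) j + r s j) s := by
    intro j s hs
    have h := (hq j s hs).sub (hp j s hs)
    convert h using 1
    case e'_4 => rfl
    case e'_5 => rfl
    case e'_8 => rfl
    have e : (Q s).mulVec (u s) = (Q s).mulVec (q s) - (Q s).mulVec (p s) := by
      rw [← Matrix.mulVec_sub]; rfl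
    rw [e]; simp [Pi.sub_apply]; ring
  -- bound on Q on [0, T]
  have hgc : Continuous fun s => ∑ i : Fin n, ∑ j : Fin n, |Q s i j| := by
    apply continuous_finset_sum; intro i _
    apply continuous_finset_sum; intro j _
    exact (hQcont i j).abs
  obtain ⟨sM, hsM, hMmax⟩ := isCompact_Icc.exists_isMaxOn (α := ℝ) ⟨0, by
      constructor <;> [rfl; exact hT]⟩ hgc.continuousOn
  set M : ℝ := ∑ i : Fin n, ∑ j : Fin n, |Q sM i j| with hM
  have hMb : ∀ s ∈ Icc (0:ℝ) T, ∀ i j, |Q s i j| ≤ M := by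
    intro s hs i j
    have h1 : |Q s i j| ≤ ∑ i' : Fin n, ∑ j' : Fin n, |Q s i' j'| := by
      calc |Q s i j| ≤ ∑ j' : Fin n, |Q s i j'| :=
            Finset.single_le_sum (f := fun j' => |Q s i j'|)
              (fun _ _ => abs_nonneg _) (Finset.mem_univ j)
        _ ≤ ∑ i' : Fin n, ∑ j' : Fin n, |Q s i' j'| :=
            Finset.single_le_sum (f := fun i' => ∑ j' : Fin n, |Q s i' j'|)
              (fun _ _ => Finset.sum_nonneg fun _ _ => abs_nonneg _) (Finset.mem_univ i)
    exact h1.trans (hMmax hs)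
  set K : ℝ := n * M + 1 with hK
  have key : ∀ ε : ℝ, 0 < ε → ∀ s ∈ Icc (0:ℝ) T, ∀ j, 0 < u s j + ε * Real.exp (K * s) := by
    intro ε hε
    by_contra hcon
    push_neg at hcon
    obtain ⟨s₁, hs₁, j₁, hj₁⟩ := hcon
    set v : ℝ → Fin n → ℝ := fun s j => u s j + ε * Real.exp (K * s) with hv
    have hexpc : Continuous fun s : ℝ => ε * Real.exp (K * s) :=
      continuous_const.mul (Real.continuous_exp.comp (continuous_const.mul continuous_id))
    have hvc : ∀ j, ContinuousOn (fun s => v s j) (Icc 0 T) := by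
      intro j s hs
      exact (((hud j s hs.1).continuousAt).add hexpc.continuousAt).continuousWithinAt
    set S : Set ℝ := ⋃ j : Fin n, (Icc 0 T ∩ (fun s => v s j) ⁻¹' Iic 0) with hS
    have hSclosed : IsClosed S := isClosed_iUnion_of_finite fun j =>
      (hvc j).preimage_isClosed_of_isClosed isClosed_Icc isClosed_Iic
    have hSne : S.Nonempty := ⟨s₁, Set.mem_iUnion.2 ⟨j₁, hs₁, hj₁⟩⟩
    have hSbdd : BddBelow S := ⟨0, fun x hx => by
      obtain ⟨j, hj⟩ := Set.mem_iUnion.1 hx; exact hj.1.1⟩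
    set t₀ : ℝ := sInf S with ht₀
    have ht₀S : t₀ ∈ S := hSclosed.csInf_mem hSne hSbdd
    obtain ⟨i, hiIcc, hiv⟩ : ∃ i, t₀ ∈ Icc (0:ℝ) T ∧ v t₀ i ≤ 0 := by
      obtain ⟨j, hj⟩ := Set.mem_iUnion.1 ht₀S; exact ⟨j, hj.1, hj.2⟩
    have ht₀pos : 0 < t₀ := by
      rcases lt_or_eq_of_le hiIcc.1 with h | h
      · exact h
      · exfalso
        have he : v 0 i = ε := by simp [hv, hu0]
        rw [← h] at hiv
        rw [he] at hiv
        linarith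
    have hpre : ∀ s, 0 ≤ s → s < t₀ → ∀ j, 0 < v s j := by
      intro s hs hst j
      by_contra hns
      push_neg at hns
      have hsS : s ∈ S := Set.mem_iUnion.2 ⟨j, ⟨hs, hst.le.trans hiIcc.2⟩, hns⟩
      exact absurd (csInf_le hSbdd hsS) (not_le.2 hst)
    have hge : ∀ j, 0 ≤ v t₀ j := by
      intro j
      have hc : ContinuousAt (fun s => v s j) t₀ :=
        ((hud j t₀ ht₀pos.le).continuousAt).add hexpc.continuousAt
      have ht : Tendsto (fun s => v s j) (𝓝[<] t₀) (𝓝 (v t₀ j)) :=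
        hc.tendsto.mono_left nhdsWithin_le_nhds
      refine ge_of_tendsto ht ?_
      filter_upwards [Ioo_mem_nhdsLT_of_mem (⟨ht₀pos, le_rfl⟩ : t₀ ∈ Ioc 0 t₀)] with s hs
      exact (hpre s hs.1.le hs.2 j).le
    have hvi0 : v t₀ i = 0 := le_antisymm hiv (hge i)
    set E : ℝ := ε * Real.exp (K * t₀) with hE
    have hEpos : 0 < E := mul_pos hε (Real.exp_pos _)
    have hui : u t₀ i = -E := by
      have : u t₀ i + E = 0 := hvi0
      linarith
    have hub : ∀ j, -E ≤ u t₀ j := by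
      intro j
      have := hge j
      simp only [hv] at this
      linarith [this]
    set D : ℝ := ((Q t₀).mulVec (u t₀) i + r t₀ i) + ε * (Real.exp (K * t₀) * K) with hD
    have hderiv : HasDerivAt (fun s => v s i) D t₀ := by
      have h1 : HasDerivAt (fun s : ℝ => K * s) K t₀ := by
        simpa using (hasDerivAt_id t₀).const_mul K
      have h2 : HasDerivAt (fun s : ℝ => ε * Real.exp (K * s))
          (ε * (Real.exp (K * t₀) * K)) t₀ := (h1.exp).const_mul ε
      exact (hud i t₀ ht₀pos.le).add h2
    -- D ≤ 0 via left limit of slopes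
    have hDle : D ≤ 0 := by
      have hs1 : Tendsto (slope (fun s => v s i) t₀) (𝓝[<] t₀) (𝓝 D) :=
        (hasDerivAt_iff_tendsto_slope.1 hderiv).mono_left
          (nhdsWithin_mono _ fun x hx => ne_of_lt hx)
      refine le_of_tendsto hs1 ?_
      filter_upwards [Ioo_mem_nhdsLT_of_mem (⟨ht₀pos, le_rfl⟩ : t₀ ∈ Ioc 0 t₀)] with s hs
      have hvs : 0 < v s i := hpre s hs.1.le hs.2 i
      have heq : slope (fun s => v s i) t₀ s = v s i / (s - t₀) := by
        rw [slope_def_field, hvi0, sub_zero]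
      rw [heq]
      exact div_nonpos_iff.2 (Or.inl ⟨hvs.le, by linarith [hs.2]⟩)
    -- D > 0
    have hDpos : 0 < D := by
      have hterm : ∀ j, -(M * E) ≤ Q t₀ i j * u t₀ j := by
        intro j
        have habs := hMb t₀ hiIcc i j
        have hle : Q t₀ i j ≤ M := (abs_le.1 habs).2
        have hgeQ : -M ≤ Q t₀ i j := (abs_le.1 habs).1
        by_cases hij : j = i
        · subst hij
          rw [hui]
          nlinarith
        · have hQ0 : 0 ≤ Q t₀ i j := hQmetzler t₀ ht₀pos.le i j (Ne.symm hij)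
          nlinarith [hub j]
      have hsum : -(n * M * E) ≤ (Q t₀).mulVec (u t₀) i := by
        have : ((Finset.univ : Finset (Fin n)).sum fun _ => -(M * E)) ≤
            ∑ j, Q t₀ i j * u t₀ j :=
          Finset.sum_le_sum fun j _ => hterm j
        simpa [Matrix.mulVec, dotProduct, Finset.sum_const, mul_assoc] using this
      have hr0 : 0 ≤ r t₀ i := hrnonneg t₀ ht₀pos.le i
      have hKE : ε * (Real.exp (K * t₀) * K) = (n * M + 1) * E := by
        rw [hE, hK]; ring
      rw [hD, hKE]
      nlinarith
    linarith
  have hfin : 0 ≤ u T i0 := by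
    by_contra h
    push_neg at h
    set ε : ℝ := -u T i0 / Real.exp (K * T) with hε
    have hεpos : 0 < ε := div_pos (neg_pos.2 h) (Real.exp_pos _)
    have h1 := key ε hεpos T ⟨hT, le_rfl⟩ i0
    have h2 : u T i0 + ε * Real.exp (K * T) = 0 := by
      rw [hε]
      field_simp
      ring
    linarith
  simpa [hu] using hfin
end
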